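/- Let A be a matrix satisfying the RIP of order K with constant δ, Λ with |Λ| < K, and u with ||u||_0 ≤ K − |Λ|, supp(u) ∩ Λ = ∅. Then the projection of Au onto the range of A_Λ satisfies ||P_Λ A u||_2 ≤ (δ/(1−δ)) ||A u||_2. -/

import Mathlib

/-- Squared Euclidean norm of a vector. -/
def sqnorm {n : Type*} [Fintype n] (x : n → ℝ) : ℝ := ∑ i, x i ^ 2

/-- A matrix `A` satisfies the restricted isometry property (RIP) of order `K`
with constant `δ` if `(1-δ)‖x‖² ≤ ‖Ax‖² ≤ (1+δ)‖x‖²` for all `K`-sparse `x`. -/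
def RIP {m n : Type*} [Fintype m] [Fintype n] (A : Matrix m n ℝ) (K : ℕ) (δ : ℝ) : Prop :=
  ∀ x : n → ℝ, (Function.support x).ncard ≤ K →
    (1 - δ) * sqnorm x ≤ sqnorm (A.mulVec x) ∧ sqnorm (A.mulVec x) ≤ (1 + δ) * sqnorm x

lemma sqnorm_nonneg {n : Type*} [Fintype n] (x : n → ℝ) : 0 ≤ sqnorm x :=
  Finset.sum_nonneg fun _ _ => sq_nonneg _

lemma sqnorm_eq_zero {n : Type*} [Fintype n] {x : n → ℝ} (h : sqnorm x = 0) : x = 0 := by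
  funext i
  have := (Finset.sum_eq_zero_iff_of_nonneg (fun i _ => sq_nonneg (x i))).mp h i (Finset.mem_univ i)
  exact pow_eq_zero_iff (by norm_num) |>.mp this

lemma sqnorm_add {n : Type*} [Fintype n] (a b : n → ℝ) :
    sqnorm (a + b) = sqnorm a + sqnorm b + 2 * ∑ i, a i * b i := by
  simp only [sqnorm, Pi.add_apply, Finset.mul_sum]
  rw [← Finset.sum_add_distrib, ← Finset.sum_add_distrib]
  exact Finset.sum_congr rfl fun i _ => by ring

lemma sqnorm_sub {n : Type*} [Fintype n] (a b : n → ℝ) :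
    sqnorm (a - b) = sqnorm a + sqnorm b - 2 * ∑ i, a i * b i := by
  simp only [sqnorm, Pi.sub_apply, Finset.mul_sum]
  rw [← Finset.sum_add_distrib, ← Finset.sum_sub_distrib]
  exact Finset.sum_congr rfl fun i _ => by ring

lemma sqnorm_smul {n : Type*} [Fintype n] (c : ℝ) (x : n → ℝ) :
    sqnorm (c • x) = c ^ 2 * sqnorm x := by
  simp only [sqnorm, Pi.smul_apply, smul_eq_mul, Finset.mul_sum]
  exact Finset.sum_congr rfl fun i _ => by ring

/-- Polarization bound for disjointly supported vectors. -/
lemma rip_ip_le {M N K : ℕ} (A : Matrix (Fin M) (Fin N) ℝ) {δ : ℝ} (hA : RIP A K δ)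
    (x z : Fin N → ℝ) (hdisj : ∀ i, x i * z i = 0)
    (hcard : (Function.support x ∪ Function.support z).ncard ≤ K) :
    2 * ∑ i, A.mulVec x i * A.mulVec z i ≤ δ * (sqnorm x + sqnorm z) := by
  have hadd : (Function.support (x + z)).ncard ≤ K :=
    le_trans (Set.ncard_le_ncard (Function.support_add x z) (Set.toFinite _)) hcard
  have hsub : (Function.support (x - z)).ncard ≤ K :=
    le_trans (Set.ncard_le_ncard (Function.support_sub x z) (Set.toFinite _)) hcard
  have h1 := (hA (x + z) hadd).2
  have h2 := (hA (x - z) hsub).1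
  have hx0 : ∑ i, x i * z i = 0 := Finset.sum_eq_zero fun i _ => hdisj i
  rw [Matrix.mulVec_add, sqnorm_add, sqnorm_add, hx0] at h1
  rw [Matrix.mulVec_sub, sqnorm_sub, sqnorm_sub, hx0] at h2
  linarith

/-- Near-orthogonality of images of disjointly supported vectors under a RIP matrix. -/
lemma rip_ip_sqrt {M N K : ℕ} (A : Matrix (Fin M) (Fin N) ℝ) {δ : ℝ} (hδ : 0 ≤ δ)
    (hA : RIP A K δ) (x z : Fin N → ℝ) (hdisj : ∀ i, x i * z i = 0)
    (hcard : (Function.support x ∪ Function.support z).ncard ≤ K) :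
    ∑ i, A.mulVec x i * A.mulVec z i
      ≤ δ * (Real.sqrt (sqnorm x) * Real.sqrt (sqnorm z)) := by
  by_cases hx : sqnorm x = 0
  · have : x = 0 := sqnorm_eq_zero hx
    subst this
    simp [Matrix.mulVec_zero]
    positivity
  by_cases hz : sqnorm z = 0
  · have : z = 0 := sqnorm_eq_zero hz
    subst this
    simp [Matrix.mulVec_zero]
    positivity
  have hxpos : 0 < sqnorm x := lt_of_le_of_ne (sqnorm_nonneg x) (Ne.symm hx)
  have hzpos : 0 < sqnorm z := lt_of_le_of_ne (sqnorm_nonneg z) (Ne.symm hz)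
  have hsx : 0 < Real.sqrt (sqnorm x) := Real.sqrt_pos.mpr hxpos
  have hsz : 0 < Real.sqrt (sqnorm z) := Real.sqrt_pos.mpr hzpos
  set c : ℝ := Real.sqrt (Real.sqrt (sqnorm z) / Real.sqrt (sqnorm x)) with hc
  have hcpos : 0 < c := Real.sqrt_pos.mpr (div_pos hsz hsx)
  have hc2 : c ^ 2 = Real.sqrt (sqnorm z) / Real.sqrt (sqnorm x) :=
    Real.sq_sqrt (le_of_lt (div_pos hsz hsx))
  have hdisj' : ∀ i, (c • x) i * (c⁻¹ • z) i = 0 := by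
    intro i
    simp only [Pi.smul_apply, smul_eq_mul]
    rw [mul_mul_mul_comm, hdisj i, mul_zero]
  have hsubx : Function.support (c • x) ⊆ Function.support x :=
    Function.support_const_smul_subset c x
  have hsubz : Function.support (c⁻¹ • z) ⊆ Function.support z :=
    Function.support_const_smul_subset c⁻¹ z
  have hcard' : (Function.support (c • x) ∪ Function.support (c⁻¹ • z)).ncard ≤ K :=
    le_trans (Set.ncard_le_ncard (Set.union_subset_union hsubx hsubz) (Set.toFinite _)) hcard
  have key := rip_ip_le A hA (c • x) (c⁻¹ • z) hdisj' hcard'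
  rw [Matrix.mulVec_smul, Matrix.mulVec_smul, sqnorm_smul, sqnorm_smul] at key
  have hsum : ∑ i, (c • A.mulVec x) i * (c⁻¹ • A.mulVec z) i
      = ∑ i, A.mulVec x i * A.mulVec z i := by
    apply Finset.sum_congr rfl
    intro i _
    simp only [Pi.smul_apply, smul_eq_mul]
    field_simp
  rw [hsum] at key
  have hcinv2 : (c⁻¹) ^ 2 = Real.sqrt (sqnorm x) / Real.sqrt (sqnorm z) := by
    rw [inv_pow, hc2, inv_div]
  have hsqx : Real.sqrt (sqnorm x) * Real.sqrt (sqnorm x) = sqnorm x :=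
    Real.mul_self_sqrt hxpos.le
  have hsqz : Real.sqrt (sqnorm z) * Real.sqrt (sqnorm z) = sqnorm z :=
    Real.mul_self_sqrt hzpos.le
  have e : (Real.sqrt (sqnorm z) / Real.sqrt (sqnorm x)) * sqnorm x
      + (Real.sqrt (sqnorm x) / Real.sqrt (sqnorm z)) * sqnorm z
      = 2 * (Real.sqrt (sqnorm x) * Real.sqrt (sqnorm z)) := by
    field_simp
    nlinarith [hsqx, hsqz]
  rw [hc2, hcinv2, e] at key
  linarith

/-- The projection of `Au` onto the column span of `A_Λ` is small when `u` is a
sparse vector supported off `Λ` and `A` satisfies the RIP. -/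
theorem projection_small {M N K : ℕ} (A : Matrix (Fin M) (Fin N) ℝ) (δ : ℝ)
    (hδ : δ ∈ Set.Ioo (0 : ℝ) 1) (hA : RIP A K δ)
    (Λ : Finset (Fin N)) (hΛ : Λ.card < K)
    (V : Submodule ℝ (EuclideanSpace ℝ (Fin M)))
    (hV : V = Submodule.span ℝ {v : EuclideanSpace ℝ (Fin M) | ∃ j ∈ Λ, v = fun i => A i j})
    (u : Fin N → ℝ)
    (hu : (Function.support u).ncard ≤ K - Λ.card)
    (hsupp : ∀ j ∈ Λ, u j = 0)
    (y : EuclideanSpace ℝ (Fin M)) (hy : y = A.mulVec u) :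
    Real.sqrt (sqnorm ((↑(Submodule.orthogonalProjectionOnto V y) : EuclideanSpace ℝ (Fin M)) : Fin M → ℝ))
      ≤ (δ / (1 - δ)) * Real.sqrt (sqnorm (A.mulVec u)) := by
  obtain ⟨hδ0, hδ1⟩ := hδ
  set p : EuclideanSpace ℝ (Fin M) := ↑(Submodule.orthogonalProjectionOnto V y) with hpdef
  -- Write `p` as `A.mulVec w` with `w` supported on `Λ`.
  have hpV : p ∈ V := (Submodule.orthogonalProjectionOnto V y).2
  have hset : {v : EuclideanSpace ℝ (Fin M) | ∃ j ∈ Λ, v = fun i => A i j}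
      = Set.range (fun j : Λ => (WithLp.toLp 2 (fun i => A i (j : Fin N)) : EuclideanSpace ℝ (Fin M))) := by
    ext v
    simp only [Set.mem_setOf_eq, Set.mem_range, Subtype.exists]
    constructor
    · rintro ⟨j, hj, h⟩; exact ⟨j, hj, by rw [← h]⟩
    · rintro ⟨j, hj, rfl⟩; exact ⟨j, hj, rfl⟩
  have hex : ∃ w : Fin N → ℝ, (Function.support w ⊆ ↑Λ) ∧ A.mulVec w = (p : Fin M → ℝ) := by
    rw [hV, hset, Submodule.mem_span_range_iff_exists_fun] at hpV
    obtain ⟨c, hc⟩ := hpV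
    refine ⟨fun j => if h : j ∈ Λ then c ⟨j, h⟩ else 0, ?_, ?_⟩
    · intro j hj
      simp only [Function.mem_support, dite_ne_right_iff] at hj
      obtain ⟨hjΛ, -⟩ := hj
      exact hjΛ
    · funext i
      have hpi := congrArg (fun v : EuclideanSpace ℝ (Fin M) => v i) hc
      have hsum : (∑ j : Λ, c j • (WithLp.toLp 2 (fun i => A i (j : Fin N)) : EuclideanSpace ℝ (Fin M))) i
          = ∑ j : Λ, c j * A i (j : Fin N) := by
        simp [PiLp.smul_apply]
      rw [hsum] at hpi
      rw [Matrix.mulVec, dotProduct]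
      rw [← Finset.sum_subset (Finset.subset_univ Λ) (fun j _ hj => by simp [hj])]
      rw [← Finset.sum_attach Λ (fun j => A i j * if h : j ∈ Λ then c ⟨j, h⟩ else 0)]
      rw [← hpi]
      apply Finset.sum_congr rfl
      intro j _
      simp [j.2, mul_comm]
  obtain ⟨w, hwΛ, hAw⟩ := hex
  -- Support cardinalities.
  have hwcard : (Function.support w).ncard ≤ Λ.card := by
    have := Set.ncard_le_ncard hwΛ (Set.toFinite _)
    rwa [Set.ncard_coe_finset] at this
  have hwK : (Function.support w).ncard ≤ K := le_trans hwcard hΛ.le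
  have huK : (Function.support u).ncard ≤ K := le_trans hu (Nat.sub_le _ _)
  have hunion : (Function.support w ∪ Function.support u).ncard ≤ K := by
    calc (Function.support w ∪ Function.support u).ncard
        ≤ (Function.support w).ncard + (Function.support u).ncard :=
          Set.ncard_union_le _ _
      _ ≤ Λ.card + (K - Λ.card) := Nat.add_le_add hwcard hu
      _ = K := Nat.add_sub_cancel' hΛ.le
  -- Disjoint supports.
  have hdisj : ∀ i, w i * u i = 0 := by
    intro i
    by_cases h : i ∈ Λ
    · rw [hsupp i h, mul_zero]
    · have : w i = 0 := by
        by_contra h'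
        exact h (hwΛ (Function.mem_support.mpr h'))
      rw [this, zero_mul]
  -- Projection identity : sqnorm p = ⟪p, y⟫.
  have hmem : p ∈ V := (Submodule.orthogonalProjectionOnto V y).2
  have horth : y - p ∈ Vᗮ := V.sub_starProjection_mem_orthogonal y
  have h0 : (inner ℝ p (y - p) : ℝ) = 0 := (Submodule.mem_orthogonal V _).mp horth p hmem
  rw [inner_sub_right] at h0
  have hpy : (inner ℝ p y : ℝ) = ∑ i, (p : Fin M → ℝ) i * y i := by
    simp [PiLp.inner_apply, RCLike.inner_apply, conj_trivial]
    exact Finset.sum_congr rfl fun i _ => mul_comm _ _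
  have hpp : (inner ℝ p p : ℝ) = sqnorm (p : Fin M → ℝ) := by
    rw [PiLp.inner_apply]
    simp [RCLike.inner_apply, conj_trivial, sqnorm, sq]
  rw [hpy, hpp] at h0
  have hproj : sqnorm (p : Fin M → ℝ) = ∑ i, A.mulVec w i * A.mulVec u i := by
    have hstep : sqnorm (p : Fin M → ℝ) = ∑ i, (p : Fin M → ℝ) i * y i := by linarith
    rw [hstep]
    apply Finset.sum_congr rfl
    intro i _
    rw [← hAw, hy]
  -- Near-orthogonality bound.
  have hB := rip_ip_sqrt A hδ0.le hA w u hdisj hunion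
  rw [← hproj] at hB
  -- RIP lower bounds.
  have hw_low := (hA w hwK).1
  have hu_low := (hA u huK).1
  rw [hAw] at hw_low
  -- Final arithmetic.
  set a := Real.sqrt (sqnorm (p : Fin M → ℝ)) with ha
  set b := Real.sqrt (sqnorm (A.mulVec u)) with hb
  have ha0 : 0 ≤ a := Real.sqrt_nonneg _
  have hb0 : 0 ≤ b := Real.sqrt_nonneg _
  have ha2 : a ^ 2 = sqnorm (p : Fin M → ℝ) := Real.sq_sqrt (sqnorm_nonneg _)
  have hb2 : b ^ 2 = sqnorm (A.mulVec u) := Real.sq_sqrt (sqnorm_nonneg _)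
  set r := Real.sqrt (1 - δ) with hr
  have hr0 : 0 < r := Real.sqrt_pos.mpr (by linarith)
  have hr2 : r ^ 2 = 1 - δ := Real.sq_sqrt (by linarith)
  have hrw : r * Real.sqrt (sqnorm w) ≤ a := by
    rw [← Real.sqrt_mul (by linarith : (0:ℝ) ≤ 1 - δ)]
    exact Real.sqrt_le_sqrt (by linarith [hw_low])
  have hru : r * Real.sqrt (sqnorm u) ≤ b := by
    rw [← Real.sqrt_mul (by linarith : (0:ℝ) ≤ 1 - δ)]
    exact Real.sqrt_le_sqrt (by linarith [hu_low])
  have hsw0 : 0 ≤ Real.sqrt (sqnorm w) := Real.sqrt_nonneg _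
  have hsu0 : 0 ≤ Real.sqrt (sqnorm u) := Real.sqrt_nonneg _
  have hmul : (r * Real.sqrt (sqnorm w)) * (r * Real.sqrt (sqnorm u)) ≤ a * b :=
    mul_le_mul hrw hru (by positivity) ha0
  have hkey : (1 - δ) * a ^ 2 ≤ δ * (a * b) := by
    have h1 : (1 - δ) * (sqnorm (p : Fin M → ℝ)) ≤ (1 - δ) * (δ * (Real.sqrt (sqnorm w) * Real.sqrt (sqnorm u))) :=
      mul_le_mul_of_nonneg_left hB (by linarith)
    have h2 : (1 - δ) * (δ * (Real.sqrt (sqnorm w) * Real.sqrt (sqnorm u)))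
        = δ * ((r * Real.sqrt (sqnorm w)) * (r * Real.sqrt (sqnorm u))) := by
      rw [show (r * Real.sqrt (sqnorm w)) * (r * Real.sqrt (sqnorm u))
          = r ^ 2 * (Real.sqrt (sqnorm w) * Real.sqrt (sqnorm u)) by ring, hr2]
      ring
    have h3 : δ * ((r * Real.sqrt (sqnorm w)) * (r * Real.sqrt (sqnorm u))) ≤ δ * (a * b) :=
      mul_le_mul_of_nonneg_left hmul hδ0.le
    rw [ha2]
    linarith
  rcases eq_or_lt_of_le ha0 with hA0 | hA0
  · rw [← hA0]
    exact mul_nonneg (div_nonneg hδ0.le (by linarith)) hb0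
  · have h4 : (1 - δ) * a ≤ δ * b := by
      have := mul_le_mul_of_nonneg_right hkey (le_of_lt (inv_pos.mpr hA0))
      calc (1 - δ) * a = ((1 - δ) * a ^ 2) * a⁻¹ := by field_simp
        _ ≤ (δ * (a * b)) * a⁻¹ := this
        _ = δ * b := by field_simp
    rw [div_mul_eq_mul_div, le_div_iff₀ (by linarith)]
    linarith
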